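/- Let R be a commutative noetherian ring, 𝔭 a prime ideal, M a finitely generated R-module with M_𝔭 ≠ 0 and depth_{R_𝔭} M_𝔭 ≥ 1. Then there exists a submodule N ⊆ M such that depth_{R_𝔭} N_𝔭 = 1, N_𝔮 ≅ M_𝔮 for all primes 𝔮 not containing 𝔭, and depth_{R_𝔮} N_𝔮 ≥ min{2, depth_{R_𝔮} M_𝔮} for all primes 𝔮 strictly containing 𝔭. -/

import Mathlib

open CategoryTheory

/-- The depth of a module `M` over a noetherian local ring `A`:
`inf { n | Ext^n_A(A/𝔪, M) ≠ 0 }`, with the convention that the depth of the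
zero module is `∞` (the infimum of the empty set). -/
noncomputable def moduleDepth (A : Type) [CommRing A] [IsLocalRing A]
    (M : Type) [AddCommGroup M] [Module A M] : ℕ∞ :=
  sInf {d : ℕ∞ | ∃ n : ℕ, d = n ∧
    Nontrivial (((Ext A (ModuleCat A) n).obj
      (Opposite.op (ModuleCat.of A (IsLocalRing.ResidueField A)))).obj (ModuleCat.of A M))}

open CategoryTheory Limits Opposite


section Abstract
variable {A : Type} [CommRing A]

noncomputable instance (Y : ModuleCat A) : PreservesLimits ((linearYoneda A (ModuleCat A)).obj Y) :=
  have : PreservesLimits ((linearYoneda A (ModuleCat A)).obj Y ⋙ forget _) :=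
    (inferInstance : PreservesLimits (yoneda.obj Y))
  preservesLimits_of_reflects_of_preserves _ (forget _)

noncomputable instance (Y : ModuleCat A) :
    PreservesFiniteColimits ((linearYoneda A (ModuleCat A)).obj Y).rightOp :=
  preservesFiniteColimits_rightOp _

/-- `Ext^0 (X, Y) ≅ Hom(X,Y)`. -/
noncomputable def extZeroIso (X Y : ModuleCat A) :
    ((Ext A (ModuleCat A) 0).obj (op X)).obj Y ≅ ModuleCat.of A (X ⟶ Y) :=
  (((((linearYoneda A (ModuleCat A)).obj Y).rightOp).leftDerivedZeroIsoSelf).app X).unop.symm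

lemma subsingleton_of_iso {X Y : ModuleCat A} (e : X ≅ Y) (h : Subsingleton Y) :
    Subsingleton X :=
  ((forget (ModuleCat A)).mapIso e).toEquiv.subsingleton

noncomputable def lyMap {X : ModuleCat A} (P : ProjectiveResolution X) {Y Y' : ModuleCat A}
    (f : Y ⟶ Y') : P.complex.linearYonedaObj A Y ⟶ P.complex.linearYonedaObj A Y' where
  f i := ((linearYoneda A (ModuleCat A)).map f).app (op (P.complex.X i))
  comm' i j hij := by
    ext φ
    exact (Category.assoc (P.complex.d j i) (φ : P.complex.X i ⟶ Y) f).symm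

/-- The short complex of cochain complexes `Hom(P, X₁) → Hom(P, X₂) → Hom(P, X₃)`. -/
noncomputable def lyShortComplex {X : ModuleCat A} (P : ProjectiveResolution X)
    (S : ShortComplex (ModuleCat A)) : ShortComplex (CochainComplex (ModuleCat A) ℕ) :=
  ShortComplex.mk (lyMap P S.f) (lyMap P S.g) (by
    ext i φ
    have : S.f ≫ S.g = 0 := S.zero
    change (((φ : P.complex.X i ⟶ S.X₁) ≫ S.f) ≫ S.g) = 0
    exact (Category.assoc _ _ _).trans ((congrArg _ this).trans (Limits.comp_zero)))

lemma lyShortComplex_shortExact {X : ModuleCat A} (P : ProjectiveResolution X)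
    (S : ShortComplex (ModuleCat A)) (hS : S.ShortExact) :
    (lyShortComplex P S).ShortExact := by
  rw [HomologicalComplex.shortExact_iff_degreewise_shortExact]
  intro i
  have hmono : Mono S.f := hS.mono_f
  have hepi : Epi S.g := hS.epi_g
  apply ShortComplex.ShortExact.mk'
  · -- exact
    rw [ShortComplex.moduleCat_exact_iff]
    intro (φ : P.complex.X i ⟶ S.X₂) (hφ : φ ≫ S.g = 0)
    exact ⟨hS.exact.lift φ hφ, hS.exact.lift_f φ hφ⟩
  · -- mono
    rw [ModuleCat.mono_iff_injective]
    intro (φ : P.complex.X i ⟶ S.X₁) ψ (h : φ ≫ S.f = ψ ≫ S.f)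
    exact (cancel_mono S.f).mp h
  · -- epi
    rw [ModuleCat.epi_iff_surjective]
    intro (φ : P.complex.X i ⟶ S.X₃)
    have : Projective (P.complex.X i) := P.projective i
    exact ⟨Projective.factorThru φ S.g, Projective.factorThru_comp φ S.g⟩

noncomputable abbrev extModule (n : ℕ) (X Y : ModuleCat A) :=
  ((Ext A (ModuleCat A) n).obj (op X)).obj Y

lemma subsingleton_X₂_of_exact (T : ShortComplex (ModuleCat A)) (hT : T.Exact)
    (h1 : Subsingleton T.X₁) (h3 : Subsingleton T.X₃) : Subsingleton T.X₂ := by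
  rw [ShortComplex.moduleCat_exact_iff] at hT
  constructor
  intro a b
  obtain ⟨x, hx⟩ := hT a (Subsingleton.elim _ _)
  obtain ⟨y, hy⟩ := hT b (Subsingleton.elim _ _)
  rw [← hx, ← hy, Subsingleton.elim x y]

lemma ext_subsingleton_iff {X : ModuleCat A} (P : ProjectiveResolution X) (n : ℕ)
    (Y : ModuleCat A) :
    Subsingleton (extModule n X Y) ↔
      Subsingleton ((P.complex.linearYonedaObj A Y).homology n) :=
  ⟨fun h => subsingleton_of_iso (P.isoExt n Y).symm h,
   fun h => subsingleton_of_iso (P.isoExt n Y) h⟩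

lemma ext_zero_subsingleton_iff (X Y : ModuleCat A) :
    Subsingleton (extModule 0 X Y) ↔ Subsingleton (X ⟶ Y) :=
  ⟨fun h => subsingleton_of_iso (extZeroIso X Y).symm h,
   fun h => subsingleton_of_iso (extZeroIso X Y) h⟩

/-- From `Ext^n(X₃)` and `Ext^{n+1}(X₂)` trivial, deduce `Ext^{n+1}(X₁)` trivial. -/
lemma ext_succ_subsingleton_X₁ {X : ModuleCat A} {S : ShortComplex (ModuleCat A)}
    (hS : S.ShortExact) (n : ℕ)
    (h2 : Subsingleton (extModule (n + 1) X S.X₂))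
    (h3 : Subsingleton (extModule n X S.X₃)) :
    Subsingleton (extModule (n + 1) X S.X₁) := by
  have P := projectiveResolution X
  have hT := lyShortComplex_shortExact P S hS
  have e := hT.homology_exact₁ n (n + 1) rfl
  rw [ext_subsingleton_iff P]
  exact subsingleton_X₂_of_exact _ e ((ext_subsingleton_iff P n S.X₃).mp h3)
    ((ext_subsingleton_iff P (n + 1) S.X₂).mp h2)

/-- From `Ext^0(X₂)` and `Ext^1(X₁)` trivial, deduce `Ext^0(X₃)` trivial. -/
lemma ext_zero_subsingleton_X₃ {X : ModuleCat A} {S : ShortComplex (ModuleCat A)}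
    (hS : S.ShortExact)
    (h2 : Subsingleton (extModule 0 X S.X₂))
    (h1 : Subsingleton (extModule 1 X S.X₁)) :
    Subsingleton (extModule 0 X S.X₃) := by
  have P := projectiveResolution X
  have hT := lyShortComplex_shortExact P S hS
  have e := hT.homology_exact₃ 0 1 rfl
  rw [ext_subsingleton_iff P]
  exact subsingleton_X₂_of_exact _ e ((ext_subsingleton_iff P 0 S.X₂).mp h2)
    ((ext_subsingleton_iff P 1 S.X₁).mp h1)

end Abstract
section Depth
variable (A : Type) [CommRing A] [IsLocalRing A] (M : Type) [AddCommGroup M] [Module A M]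

lemma moduleDepth_le_of_nontrivial (n : ℕ)
    (h : Nontrivial (((Ext A (ModuleCat A) n).obj
      (Opposite.op (ModuleCat.of A (IsLocalRing.ResidueField A)))).obj (ModuleCat.of A M))) :
    moduleDepth A M ≤ n :=
  sInf_le ⟨n, rfl, h⟩

lemma subsingleton_ext_of_lt (n : ℕ) (h : (n : ℕ∞) < moduleDepth A M) :
    Subsingleton (((Ext A (ModuleCat A) n).obj
      (Opposite.op (ModuleCat.of A (IsLocalRing.ResidueField A)))).obj (ModuleCat.of A M)) := by
  by_contra hc
  rw [not_subsingleton_iff_nontrivial] at hc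
  exact absurd (moduleDepth_le_of_nontrivial A M n hc) (not_le.mpr h)

lemma one_le_moduleDepth_iff :
    1 ≤ moduleDepth A M ↔ Subsingleton (((Ext A (ModuleCat A) 0).obj
      (Opposite.op (ModuleCat.of A (IsLocalRing.ResidueField A)))).obj (ModuleCat.of A M)) := by
  constructor
  · intro h
    exact subsingleton_ext_of_lt A M 0 (lt_of_lt_of_le (by norm_num) h)
  · intro h
    refine le_sInf ?_
    rintro d ⟨n, rfl, hn⟩
    rcases Nat.eq_zero_or_pos n with rfl | hn'
    · exact absurd hn (not_nontrivial_iff_subsingleton.mpr h)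
    · exact_mod_cast hn'

lemma moduleDepth_eq_one
    (h0 : Subsingleton (((Ext A (ModuleCat A) 0).obj
      (Opposite.op (ModuleCat.of A (IsLocalRing.ResidueField A)))).obj (ModuleCat.of A M)))
    (h1 : Nontrivial (((Ext A (ModuleCat A) 1).obj
      (Opposite.op (ModuleCat.of A (IsLocalRing.ResidueField A)))).obj (ModuleCat.of A M))) :
    moduleDepth A M = 1 := by
  refine le_antisymm ?_ ((one_le_moduleDepth_iff A M).mpr h0)
  simpa using moduleDepth_le_of_nontrivial A M 1 h1

end Depth

section Helpers

variable {R : Type} [CommRing R]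

lemma mk_zero_iff {S : Submonoid R} {Z : Type} [AddCommGroup Z] [Module R Z]
    (z : Z) (s : S) : LocalizedModule.mk z s = 0 ↔ ∃ u : S, u • z = 0 := by
  rw [← LocalizedModule.zero_mk (S := S) s, LocalizedModule.mk_eq]
  constructor
  · rintro ⟨u, hu⟩
    refine ⟨u * s, ?_⟩
    rw [mul_smul]
    simpa using hu
  · rintro ⟨u, hu⟩
    exact ⟨u, by rw [smul_comm, hu]; simp⟩

/-- invertible scalar actions descend to localizations -/
lemma smul_inj_localized {S : Submonoid R} {Z : Type} [AddCommGroup Z] [Module R Z]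
    (t : R) (ht : ∀ z : Z, t • z = 0 → z = 0) :
    ∀ w : LocalizedModule S Z, t • w = 0 → w = 0 := by
  intro w
  induction w using LocalizedModule.induction_on with
  | h z s =>
    intro hw
    rw [LocalizedModule.smul'_mk, mk_zero_iff] at hw
    obtain ⟨u, hu⟩ := hw
    rw [smul_comm] at hu
    rw [mk_zero_iff]
    exact ⟨u, ht _ hu⟩

end Helpers

section Construction

variable (R : Type) [CommRing R]
variable (M : Type) [AddCommGroup M] [Module R M]
variable (p : Ideal R) [p.IsPrime]

/-- the submodule `𝔪 • M_p` of `M_p` -/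
noncomputable abbrev KK : Submodule (Localization.AtPrime p) (LocalizedModule p.primeCompl M) :=
  (IsLocalRing.maximalIdeal (Localization.AtPrime p)) • ⊤

/-- `M_p / 𝔪 M_p` -/
noncomputable abbrev YY := LocalizedModule p.primeCompl M ⧸ KK R M p

/-- the map `M → M_p / 𝔪 M_p` -/
noncomputable def phi : M →ₗ[R] YY R M p :=
  ((KK R M p).mkQ.restrictScalars R) ∘ₗ LocalizedModule.mkLinearMap p.primeCompl M

/-- the submodule `N`, i.e. the kernel of `M → M_p/𝔪M_p` -/
noncomputable def NN : Submodule R M := LinearMap.ker (phi R M p)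

lemma smul_YY_zero {a : R} (ha : a ∈ p) (y : YY R M p) : a • y = 0 := by
  obtain ⟨x, rfl⟩ := Submodule.Quotient.mk_surjective (KK R M p) y
  rw [← Submodule.Quotient.mk_smul, Submodule.Quotient.mk_eq_zero]
  rw [← algebraMap_smul (Localization.AtPrime p) a x]
  apply Submodule.smul_mem_smul _ Submodule.mem_top
  rw [← Localization.AtPrime.comap_maximalIdeal (I := p)] at ha
  exact ha

lemma smul_mem_NN {a : R} (ha : a ∈ p) (m : M) : a • m ∈ NN R M p := by
  simp only [NN, LinearMap.mem_ker, map_smul]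
  exact smul_YY_zero R M p ha _

lemma smul_YY_inj {t : R} (ht : t ∉ p) (y : YY R M p) (h : t • y = 0) : y = 0 := by
  have hu : IsUnit (algebraMap R (Localization.AtPrime p) t) :=
    IsLocalization.map_units (Localization.AtPrime p) (⟨t, ht⟩ : p.primeCompl)
  rw [← algebraMap_smul (Localization.AtPrime p) t y] at h
  obtain ⟨u, hu⟩ := hu
  rw [← hu] at h
  simpa using congrArg (fun z => (↑u⁻¹ : Localization.AtPrime p) • z) h

lemma smul_quot_inj {t : R} (ht : t ∉ p) (y : M ⧸ NN R M p) (h : t • y = 0) : y = 0 := by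
  obtain ⟨m, rfl⟩ := Submodule.Quotient.mk_surjective (NN R M p) y
  rw [← Submodule.Quotient.mk_smul, Submodule.Quotient.mk_eq_zero] at h
  rw [Submodule.Quotient.mk_eq_zero]
  have : phi R M p (t • m) = 0 := h
  rw [map_smul] at this
  exact smul_YY_inj R M p ht _ this

end Construction
section X
variable (R : Type) [CommRing R]
variable (M : Type) [AddCommGroup M] [Module R M]
variable (N : Submodule R M)
variable (q : Ideal R) [q.IsPrime]

noncomputable def fq : LocalizedModule q.primeCompl N →ₗ[R] LocalizedModule q.primeCompl M :=
  IsLocalizedModule.map q.primeCompl (LocalizedModule.mkLinearMap q.primeCompl N)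
    (LocalizedModule.mkLinearMap q.primeCompl M) N.subtype

noncomputable def gq : LocalizedModule q.primeCompl M →ₗ[R] LocalizedModule q.primeCompl (M ⧸ N) :=
  IsLocalizedModule.map q.primeCompl (LocalizedModule.mkLinearMap q.primeCompl M)
    (LocalizedModule.mkLinearMap q.primeCompl (M ⧸ N)) N.mkQ

lemma fq_gq_exact : Function.Exact (fq R M N q) (gq R M N q) :=
  IsLocalizedModule.map_exact q.primeCompl _ _ _ N.subtype N.mkQ
    (LinearMap.exact_subtype_mkQ N)

lemma fq_injective : Function.Injective (fq R M N q) :=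
  IsLocalizedModule.map_injective q.primeCompl _ _ N.subtype (Submodule.injective_subtype N)

lemma gq_surjective : Function.Surjective (gq R M N q) :=
  IsLocalizedModule.map_surjective q.primeCompl _ _ N.mkQ (Submodule.mkQ_surjective N)

noncomputable def locSES : ShortComplex (ModuleCat (Localization.AtPrime q)) :=
  ShortComplex.moduleCatMk
    ((fq R M N q).extendScalarsOfIsLocalization q.primeCompl (Localization.AtPrime q))
    ((gq R M N q).extendScalarsOfIsLocalization q.primeCompl (Localization.AtPrime q))
    (by
      ext z
      exact (fq_gq_exact R M N q (fq R M N q z)).mpr ⟨z, rfl⟩)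

lemma locSES_shortExact : (locSES R M N q).ShortExact := by
  apply ShortComplex.ShortExact.mk'
  · rw [ShortComplex.moduleCat_exact_iff]
    intro x hx
    exact (fq_gq_exact R M N q x).mp hx
  · rw [ModuleCat.mono_iff_injective]
    exact fq_injective R M N q
  · rw [ModuleCat.epi_iff_surjective]
    exact gq_surjective R M N q

lemma hom_residue_subsingleton (A : Type) [CommRing A] [IsLocalRing A]
    (Z : Type) [AddCommGroup Z] [Module A Z] (t : A) (ht : t ∈ IsLocalRing.maximalIdeal A)
    (hinj : ∀ z : Z, t • z = 0 → z = 0) :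
    Subsingleton (IsLocalRing.ResidueField A →ₗ[A] Z) := by
  have key : ∀ (f : IsLocalRing.ResidueField A →ₗ[A] Z) (x), f x = 0 := by
    intro f x
    obtain ⟨a, rfl⟩ := Submodule.Quotient.mk_surjective (IsLocalRing.maximalIdeal A) x
    have hx : t • (Submodule.Quotient.mk a : A ⧸ (IsLocalRing.maximalIdeal A)) = 0 := by
      rw [← Submodule.Quotient.mk_smul, Submodule.Quotient.mk_eq_zero]
      exact Ideal.mul_mem_right a _ ht
    apply hinj
    exact (map_smul f t _).symm.trans ((congrArg f hx).trans (map_zero f))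
  exact ⟨fun f g => by ext x; rw [key f x, key g x]⟩
end X

section KeyFacts
variable (R : Type) [CommRing R]
variable (M : Type) [AddCommGroup M] [Module R M]
variable (p : Ideal R) [p.IsPrime]

/-- at a prime `q ⊋ p`, the residue field has no nonzero homs into `(M/N)_q` -/
lemma hom_residue_subsingleton_q (q : Ideal R) [q.IsPrime] (hpq : p < q) :
    Subsingleton (IsLocalRing.ResidueField (Localization.AtPrime q) →ₗ[Localization.AtPrime q]
      LocalizedModule q.primeCompl (M ⧸ NN R M p)) := by
  obtain ⟨t, htq, htp⟩ := SetLike.exists_of_lt hpq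
  apply hom_residue_subsingleton _ _ (algebraMap R (Localization.AtPrime q) t)
  · rw [← Localization.AtPrime.comap_maximalIdeal (I := q)] at htq
    exact htq
  · intro z hz
    rw [algebraMap_smul] at hz
    exact smul_inj_localized t (smul_quot_inj R M p htp) z hz

/-- at `p` itself, assuming `M_p` is finite nontrivial, there is a nonzero hom
from the residue field into `(M/N)_p`. -/
lemma hom_residue_nontrivial_p [Module.Finite R M]
    (hsupp : Nontrivial (LocalizedModule p.primeCompl M)) :
    Nontrivial (IsLocalRing.ResidueField (Localization.AtPrime p) →ₗ[Localization.AtPrime p]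
      LocalizedModule p.primeCompl (M ⧸ NN R M p)) := by
  have hfin : Module.Finite (Localization.AtPrime p) (LocalizedModule p.primeCompl M) :=
    Module.Finite.of_isLocalizedModule p.primeCompl (LocalizedModule.mkLinearMap p.primeCompl M)
  -- `𝔪 M_p ≠ M_p` by Nakayama
  have hKK : KK R M p ≠ ⊤ := by
    intro h
    have h2 : (⊤ : Submodule (Localization.AtPrime p) (LocalizedModule p.primeCompl M)) = ⊥ := by
      apply Submodule.eq_bot_of_le_smul_of_le_jacobson_bot
        (IsLocalRing.maximalIdeal (Localization.AtPrime p))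
      · exact Module.finite_def.mp hfin
      · exact h.ge
      · rw [IsLocalRing.jacobson_eq_maximalIdeal ⊥ bot_ne_top]
    obtain ⟨x, y, hxy⟩ := hsupp
    exact hxy (by
      have hx : x ∈ (⊤ : Submodule (Localization.AtPrime p) _) := Submodule.mem_top
      have hy : y ∈ (⊤ : Submodule (Localization.AtPrime p) _) := Submodule.mem_top
      rw [h2, Submodule.mem_bot] at hx hy
      rw [hx, hy])
  have hYY : Nontrivial (YY R M p) :=
    Submodule.Quotient.nontrivial_iff.mpr hKK
  -- a nonzero element of `(M/N)_p`
  have hz : ∃ z : LocalizedModule p.primeCompl (M ⧸ NN R M p), z ≠ 0 := by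
    obtain ⟨y0, hy0⟩ := exists_ne (0 : YY R M p)
    obtain ⟨x, rfl⟩ := Submodule.Quotient.mk_surjective (KK R M p) y0
    induction x using LocalizedModule.induction_on with
    | h m s =>
      refine ⟨LocalizedModule.mk (Submodule.Quotient.mk m : M ⧸ NN R M p) 1, ?_⟩
      intro h
      rw [mk_zero_iff] at h
      obtain ⟨u, hu⟩ := h
      rw [← Submodule.Quotient.mk_smul, Submodule.Quotient.mk_eq_zero] at hu
      have h1 : phi R M p ((u : R) • m) = 0 := hu
      rw [map_smul] at h1
      have h2 : phi R M p m = 0 := smul_YY_inj R M p u.2 _ h1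
      -- now conclude y0 = 0
      apply hy0
      have h3 : phi R M p m =
          Submodule.Quotient.mk (LocalizedModule.mk m (1 : p.primeCompl)) := rfl
      have h4 : (s : R) • (LocalizedModule.mk m s) = LocalizedModule.mk m 1 := by
        rw [LocalizedModule.smul'_mk]
        have := LocalizedModule.mk_cancel_common_left (M := M) s 1 m
        rw [mul_one] at this
        exact this
      have h5 : (s : R) • (Submodule.Quotient.mk (LocalizedModule.mk m s) : YY R M p) = 0 := by
        rw [← Submodule.Quotient.mk_smul, h4, ← h3, h2]
      exact smul_YY_inj R M p s.2 _ h5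
  obtain ⟨z, hz0⟩ := hz
  -- the maximal ideal annihilates z
  have hann : (IsLocalRing.maximalIdeal (Localization.AtPrime p) : Ideal _) ≤
      LinearMap.ker (LinearMap.toSpanSingleton (Localization.AtPrime p) _ z) := by
    rw [← Localization.AtPrime.map_eq_maximalIdeal, Ideal.map_le_iff_le_comap]
    intro a ha
    have : (algebraMap R (Localization.AtPrime p) a) • z = 0 := by
      rw [algebraMap_smul]
      induction z using LocalizedModule.induction_on with
      | h y s =>
        obtain ⟨m, rfl⟩ := Submodule.Quotient.mk_surjective (NN R M p) y
        rw [LocalizedModule.smul'_mk, ← Submodule.Quotient.mk_smul,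
          (Submodule.Quotient.mk_eq_zero _).mpr (smul_mem_NN R M p ha m),
          LocalizedModule.zero_mk]
    exact this
  refine nontrivial_of_ne (Submodule.liftQ _ _ hann) 0 (fun h => hz0 ?_)
  calc z = (Submodule.liftQ _ _ hann) (Submodule.Quotient.mk 1) := by
        rw [Submodule.liftQ_apply, LinearMap.toSpanSingleton_apply, one_smul]
    _ = 0 := by rw [h]; rfl

end KeyFacts

section HomComp
variable {A : Type} [CommRing A]

lemma hom_comp_subsingleton {X Y Z : ModuleCat A} (f : Y ⟶ Z) (hf : Function.Injective f)
    (h : Subsingleton (X ⟶ Z)) : Subsingleton (X ⟶ Y) :=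
  ⟨fun a b => ModuleCat.hom_ext <| LinearMap.ext fun x =>
    hf (congrArg (fun g => g.hom x) (Subsingleton.elim (a ≫ f) (b ≫ f)))⟩

lemma hom_comp_nontrivial {X Y Z : ModuleCat A} (f : Y ⟶ Z) (hf : Function.Injective f)
    (h : Nontrivial (X ⟶ Y)) : Nontrivial (X ⟶ Z) := by
  obtain ⟨a, b, hab⟩ := h
  exact ⟨a ≫ f, b ≫ f, fun hh => hab (ModuleCat.hom_ext <| LinearMap.ext fun x => hf (congrArg (fun g => g.hom x) hh))⟩

lemma ext_zero_nontrivial_iff (X Y : ModuleCat A) :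
    Nontrivial (extModule 0 X Y) ↔ Nontrivial (X ⟶ Y) := by
  rw [← not_subsingleton_iff_nontrivial, ← not_subsingleton_iff_nontrivial,
    ext_zero_subsingleton_iff]

end HomComp

/-- Let `R` be a commutative noetherian ring, `𝔭` a prime, `M` a finitely generated
`R`-module with `M_𝔭 ≠ 0` and `depth_{R_𝔭} M_𝔭 ≥ 1`.  Then there is a submodule
`N ⊆ M` with `depth_{R_𝔭} N_𝔭 = 1`, with `N_𝔮 ≅ M_𝔮` (via the localized inclusion)
for all primes `𝔮` not containing `𝔭`, and with
`depth_{R_𝔮} N_𝔮 ≥ min {2, depth_{R_𝔮} M_𝔮}` for all primes `𝔮 ⊋ 𝔭`. -/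
theorem exists_submodule_depth_one
    (R : Type) [CommRing R] [IsNoetherianRing R]
    (M : Type) [AddCommGroup M] [Module R M] [Module.Finite R M]
    (p : Ideal R) [p.IsPrime]
    (hsupp : Nontrivial (LocalizedModule p.primeCompl M))
    (hdepth : 1 ≤ moduleDepth (Localization.AtPrime p) (LocalizedModule p.primeCompl M)) :
    ∃ N : Submodule R M,
      moduleDepth (Localization.AtPrime p) (LocalizedModule p.primeCompl N) = 1 ∧
      (∀ (q : Ideal R) (_ : q.IsPrime), ¬ p ≤ q →
        Function.Bijective (IsLocalizedModule.map q.primeCompl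
          (LocalizedModule.mkLinearMap q.primeCompl N)
          (LocalizedModule.mkLinearMap q.primeCompl M) N.subtype)) ∧
      (∀ (q : Ideal R) (_ : q.IsPrime), p < q →
        min 2 (moduleDepth (Localization.AtPrime q) (LocalizedModule q.primeCompl M)) ≤
          moduleDepth (Localization.AtPrime q) (LocalizedModule q.primeCompl N)) := by
  classical
  refine ⟨NN R M p, ?_, ?_, ?_⟩
  · -- depth N_p = 1
    have h0M : Subsingleton (extModule 0
        (ModuleCat.of (Localization.AtPrime p) (IsLocalRing.ResidueField (Localization.AtPrime p)))
        (ModuleCat.of (Localization.AtPrime p) (LocalizedModule p.primeCompl M))) :=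
      (one_le_moduleDepth_iff _ _).mp hdepth
    have hHomM := (ext_zero_subsingleton_iff _ _).mp h0M
    have hHomN : Subsingleton
        (ModuleCat.of (Localization.AtPrime p) (IsLocalRing.ResidueField (Localization.AtPrime p)) ⟶
          ModuleCat.of (Localization.AtPrime p) (LocalizedModule p.primeCompl (NN R M p))) :=
      hom_comp_subsingleton (locSES R M (NN R M p) p).f (fq_injective R M (NN R M p) p) hHomM
    have h0N := (ext_zero_subsingleton_iff _ _).mpr hHomN
    have h1N : Nontrivial (extModule 1
        (ModuleCat.of (Localization.AtPrime p) (IsLocalRing.ResidueField (Localization.AtPrime p)))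
        (ModuleCat.of (Localization.AtPrime p)
          (LocalizedModule p.primeCompl (NN R M p)))) := by
      rw [← not_subsingleton_iff_nontrivial]
      intro h1
      have h0Y := ext_zero_subsingleton_X₃ (locSES_shortExact R M (NN R M p) p) h0M h1
      have hsub := (ext_zero_subsingleton_iff _ _).mp h0Y
      have hnt := hom_residue_nontrivial_p R M p hsupp
      rw [← not_subsingleton_iff_nontrivial] at hnt
      exact hnt ⟨fun f g => congrArg ModuleCat.Hom.hom (@Subsingleton.elim _ hsub (ModuleCat.ofHom f)
        (ModuleCat.ofHom g : _ ⟶ (locSES R M (NN R M p) p).X₃))⟩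
    exact moduleDepth_eq_one _ _ h0N h1N
  · -- N_q ≅ M_q for q not containing p
    intro q hq hpq
    constructor
    · exact fq_injective R M (NN R M p) q
    · intro z
      induction z using LocalizedModule.induction_on with
      | h m s =>
        obtain ⟨t, htp, htq⟩ := Set.not_subset.mp hpq
        have htm : t • m ∈ NN R M p := smul_mem_NN R M p htp m
        refine ⟨LocalizedModule.mk ⟨t • m, htm⟩ (⟨t, htq⟩ * s), ?_⟩
        rw [IsLocalizedModule.map_LocalizedModules]
        exact LocalizedModule.mk_cancel_common_left (⟨t, htq⟩ : q.primeCompl) s m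
  · -- depth inequality at q ⊃ p
    intro q hq hpq
    refine le_sInf ?_
    rintro d ⟨n, rfl, hn⟩
    match n with
    | 0 =>
      have hNq : Nontrivial
          (ModuleCat.of (Localization.AtPrime q) (IsLocalRing.ResidueField (Localization.AtPrime q)) ⟶
            ModuleCat.of (Localization.AtPrime q) (LocalizedModule q.primeCompl (NN R M p))) :=
        (ext_zero_nontrivial_iff _ _).mp hn
      have hMq := hom_comp_nontrivial (locSES R M (NN R M p) q).f (fq_injective R M (NN R M p) q) hNq
      have h0Mq := (ext_zero_nontrivial_iff _ _).mpr hMq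
      have := moduleDepth_le_of_nontrivial (Localization.AtPrime q)
        (LocalizedModule q.primeCompl M) 0 h0Mq
      refine le_trans (min_le_right _ _) ?_
      simpa using this
    | 1 =>
      by_cases hM1 : Nontrivial (extModule 1
          (ModuleCat.of (Localization.AtPrime q) (IsLocalRing.ResidueField (Localization.AtPrime q)))
          (ModuleCat.of (Localization.AtPrime q) (LocalizedModule q.primeCompl M)))
      · have := moduleDepth_le_of_nontrivial (Localization.AtPrime q)
          (LocalizedModule q.primeCompl M) 1 hM1
        refine le_trans (min_le_right _ _) ?_
        simpa using this
      · exfalso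
        rw [not_nontrivial_iff_subsingleton] at hM1
        have h0Y : Subsingleton (extModule 0
            (ModuleCat.of (Localization.AtPrime q) (IsLocalRing.ResidueField (Localization.AtPrime q)))
            (ModuleCat.of (Localization.AtPrime q)
              (LocalizedModule q.primeCompl (M ⧸ NN R M p)))) :=
          (ext_zero_subsingleton_iff _ _).mpr (have := hom_residue_subsingleton_q R M p q hpq
            ⟨fun f g => ModuleCat.hom_ext (Subsingleton.elim _ _)⟩)
        have := ext_succ_subsingleton_X₁ (locSES_shortExact R M (NN R M p) q) 0 hM1 h0Y
        rw [← not_subsingleton_iff_nontrivial] at hn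
        exact hn this
    | (n + 2) =>
      refine le_trans (min_le_left _ _) ?_
      exact_mod_cast Nat.le_add_left 2 n
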